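/- arXiv:2306.09513 — 2 statements merged into one kernel-verified Lean document; each statement's English description precedes it below -/
import Mathlib

section
/- Let U : ℝ^d → ℝ be C² with ‖∇²U(x)‖ ≤ 1 for all x. Let δ > 0, K ∈ ℕ* with T = Kδ ≤ 1/10, and let Ψ = (∇Φ_δ^{−K})∘Φ_δ^K. Then for every z ∈ ℝ^{2d} there exist d×d matrices α, β, ζ each of operator norm at most 1 such that, in 2d×2d operator norm, ‖Ψ(z) − [[I_d − (T²/2)α , Tβ],[−T·I_d , I_d − (T²/2)ζ]]‖ ≤ T³/3. In particular ‖Ψ(z)‖ ≤ 1 + T + T²/2 + T³/3. -/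
set_option maxHeartbeats 1000000


set_option autoImplicit false

open MeasureTheory Real
open scoped RealInnerProductSpace

noncomputable section

namespace GHMCPaper

abbrev Euc (ι : Type*) := EuclideanSpace ℝ ι

variable {ι : Type*} [Fintype ι]

/-- Standard Gaussian measure `N(0, I)` on `EuclideanSpace ℝ ι`, given by its density
with respect to the Lebesgue measure. -/
def stdGaussian (ι : Type*) [Fintype ι] : Measure (Euc ι) :=
  (volume : Measure (Euc ι)).withDensity fun g =>
    ENNReal.ofReal ((2 * π) ^ (-(Fintype.card ι : ℝ) / 2) * exp (-‖g‖ ^ 2 / 2))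

/-- The Hessian `∇²U` of a potential, as a continuous linear map. -/
def hess (U : Euc ι → ℝ) (x : Euc ι) : Euc ι →L[ℝ] Euc ι :=
  fderiv ℝ (gradient U) x

/-- One Verlet (leapfrog) step of size `δ` for the potential `U`. -/
def verlet (U : Euc ι → ℝ) (δ : ℝ) (z : Euc ι × Euc ι) : Euc ι × Euc ι :=
  (z.1 + δ • z.2 - (δ ^ 2 / 2) • gradient U z.1,
    z.2 - (δ / 2) • (gradient U z.1 +
      gradient U (z.1 + δ • z.2 - (δ ^ 2 / 2) • gradient U z.1)))

/-- The inverse Verlet map. -/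
def verletInv (U : Euc ι → ℝ) (δ : ℝ) (z : Euc ι × Euc ι) : Euc ι × Euc ι :=
  (z.1 - δ • z.2 - (δ ^ 2 / 2) • gradient U z.1,
    z.2 + (δ / 2) • (gradient U z.1 +
      gradient U (z.1 - δ • z.2 - (δ ^ 2 / 2) • gradient U z.1)))

/-- The Hamiltonian `H(x,v) = U(x) + |v|²/2`. -/
def ham (U : Euc ι → ℝ) (z : Euc ι × Euc ι) : ℝ := U z.1 + ‖z.2‖ ^ 2 / 2

/-- Velocity-refreshment operator `D_η` acting on functions. -/
def refreshOp (η : ℝ) (f : Euc ι × Euc ι → ℝ) (z : Euc ι × Euc ι) : ℝ :=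
  ∫ g, f (z.1, η • z.2 + Real.sqrt (1 - η ^ 2) • g) ∂ stdGaussian ι

/-- The gHMC operator `P_ω = D_η V_δ^K` acting on functions. -/
def popOp (U : Euc ι → ℝ) (K : ℕ) (δ η : ℝ) (f : Euc ι × Euc ι → ℝ) :
    Euc ι × Euc ι → ℝ :=
  refreshOp η fun z => f ((verlet U δ)^[K] z)

/-- Unnormalised Gibbs measure `e^{-U} Leb`. -/
def gibbs0 (U : Euc ι → ℝ) : Measure (Euc ι) :=
  (volume : Measure (Euc ι)).withDensity fun x => ENNReal.ofReal (exp (-U x))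

/-- Normalised Gibbs measure `π ∝ e^{-U}`. -/
def gibbs (U : Euc ι → ℝ) : Measure (Euc ι) := (gibbs0 U Set.univ)⁻¹ • gibbs0 U

/-- The extended target `μ = π ⊗ N(0, I)`. -/
def muM (U : Euc ι → ℝ) : Measure (Euc ι × Euc ι) := (gibbs U).prod (stdGaussian ι)

/-- One step of the gHMC chain on measures: `ν ↦ ν P_ω`. -/
def ghmcStep (U : Euc ι → ℝ) (K : ℕ) (δ η : ℝ) (ν : Measure (Euc ι × Euc ι)) :
    Measure (Euc ι × Euc ι) :=
  ν.bind fun z => (stdGaussian ι).map fun g =>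
    (verlet U δ)^[K] (z.1, η • z.2 + Real.sqrt (1 - η ^ 2) • g)

/-- Relative entropy `H(ν | μ) = ∫ ln(dν/dμ) dν`. -/
def relEnt {α : Type*} [MeasurableSpace α] (ν μ' : Measure α) : ℝ :=
  ∫ z, Real.log (ν.rnDeriv μ' z).toReal ∂ν

/-- Gradient in the position variable. -/
def gradX (f : Euc ι × Euc ι → ℝ) (z : Euc ι × Euc ι) : Euc ι :=
  gradient (fun x => f (x, z.2)) z.1

/-- Gradient in the velocity variable. -/
def gradV (f : Euc ι × Euc ι → ℝ) (z : Euc ι × Euc ι) : Euc ι :=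
  gradient (fun v => f (z.1, v)) z.2

/-- Squared Euclidean norm on phase space. -/
def pnormSq (w : Euc ι × Euc ι) : ℝ := ‖w.1‖ ^ 2 + ‖w.2‖ ^ 2

/-- Fisher information `I(ν|μ)` on phase space. -/
def fisherP (ν μ' : Measure (Euc ι × Euc ι)) : ℝ :=
  ∫ z, pnormSq (gradX (fun w => Real.log (ν.rnDeriv μ' w).toReal) z,
      gradV (fun w => Real.log (ν.rnDeriv μ' w).toReal) z) ∂ν

/-- Fisher information `I(ν|π)` on position space. -/
def fisherE (ν μ' : Measure (Euc ι)) : ℝ :=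
  ∫ x, ‖gradient (fun y => Real.log (ν.rnDeriv μ' y).toReal) x‖ ^ 2 ∂ν

/-- `N` is a norm on `Euc ι`. -/
def IsNorm (N : Euc ι → ℝ) : Prop :=
  (∀ x y, N (x + y) ≤ N x + N y) ∧ (∀ (c : ℝ) x, N (c • x) = |c| * N x) ∧
    ∀ x, N x = 0 → x = 0

/-- Assumption H2 of the paper. -/
def H2 (U : Euc ι → ℝ) (N3 N4 : Euc ι → ℝ) : Prop :=
  (∀ x y z, ‖(hess U (x + y) - hess U x) z‖ ≤ N3 y * N3 z) ∧
    ∀ x y, ‖gradient U (x + y) - gradient U x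
        - (2⁻¹ : ℝ) • (hess U x y + hess U (x + y) y)‖ ≤ N4 y ^ 3

/-- The function `M` of the paper (case `L = 1`). -/
def Mfun (U : Euc ι → ℝ) (N3 N4 : Euc ι → ℝ) (z : Euc ι × Euc ι) : ℝ :=
  ‖z.2‖ ^ 2 + ‖gradient U z.1‖ ^ 2 + N3 z.2 ^ 4 + N3 (gradient U z.1) ^ 4
    + N4 z.2 ^ 6 + N4 (gradient U z.1) ^ 6


variable {ι : Type*} [Fintype ι]

/-- `□H = H - H ∘ Φ_δ^{-K}`. -/
def boxH (U : Euc ι → ℝ) (δ : ℝ) (K : ℕ) (z : Euc ι × Euc ι) : ℝ :=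
  ham U z - ham U ((verletInv U δ)^[K] z)

/-- Action of the adjoint `(V_δ^K)^*` on relative densities:
`(V_δ^K)^* h = (h ∘ Φ_δ^{-K}) e^{□H}`. -/
def Vstar (U : Euc ι → ℝ) (δ : ℝ) (K : ℕ) (h : Euc ι × Euc ι → ℝ)
    (z : Euc ι × Euc ι) : ℝ :=
  h ((verletInv U δ)^[K] z) * Real.exp (boxH U δ K z)

/-- The full (phase-space) gradient `∇f = (∇ₓf, ∇ᵥf)`. -/
def fullGrad (f : Euc ι × Euc ι → ℝ) (z : Euc ι × Euc ι) : Euc ι × Euc ι :=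
  (gradX f z, gradV f z)

/-- Operator norm of a linear map on phase space, with respect to the Euclidean
phase-space norm. -/
def phaseOpNorm (A : (Euc ι × Euc ι) →ₗ[ℝ] (Euc ι × Euc ι)) : ℝ :=
  sInf {c : ℝ | 0 ≤ c ∧
    ∀ u, Real.sqrt (pnormSq (A u)) ≤ c * Real.sqrt (pnormSq u)}

/-- The error term `Er₁^{s,j}(h) = ∫ |(∇□H)∘Φ_s^j|² h dμ`. -/
def Er1 (U : Euc ι → ℝ) (s : ℝ) (j : ℕ) (μ' : Measure (Euc ι × Euc ι))
    (h : Euc ι × Euc ι → ℝ) : ℝ :=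
  ∫ z, pnormSq (fullGrad (boxH U s j) ((verlet U s)^[j] z)) * h z ∂μ'

/-- The Hamiltonian vector field `F_H(x,v) = (v, -∇U(x))`. -/
def FH (U : Euc ι → ℝ) (z : Euc ι × Euc ι) : Euc ι × Euc ι :=
  (z.2, -gradient U z.1)

/-- The error term `Er₂(h) = ∫₀^δ ∫ |∂ₛΦₛ - F_H∘Φₛ|² h dμ ds`. -/
def Er2 (U : Euc ι → ℝ) (δ : ℝ) (μ' : Measure (Euc ι × Euc ι))
    (h : Euc ι × Euc ι → ℝ) : ℝ :=
  ∫ s in (0 : ℝ)..δ,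
    ∫ z, pnormSq (deriv (fun t => verlet U t z) s - FH U (verlet U s z)) * h z ∂μ'

/-- Fisher information `I(h) = ∫ |∇h|²/h dμ` of a relative density. -/
def fisherDen (μ' : Measure (Euc ι × Euc ι)) (h : Euc ι × Euc ι → ℝ) : ℝ :=
  ∫ z, pnormSq (fullGrad h z) / h z ∂μ'

/-- Entropy `H(h) = ∫ h ln h dμ` of a relative density. -/
def entFun (μ' : Measure (Euc ι × Euc ι)) (h : Euc ι × Euc ι → ℝ) : ℝ :=
  ∫ z, h z * Real.log (h z) ∂μ'

section Aux

variable {d : ℕ}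

local notation "E" => Euc (Fin d)
local notation "P" => (Euc (Fin d)) × (Euc (Fin d))

/-- Euclidean phase-space norm. -/
def pn (u : P) : ℝ := Real.sqrt (‖u.1‖ ^ 2 + ‖u.2‖ ^ 2)

lemma sqrt_pnormSq (u : P) : Real.sqrt (pnormSq u) = pn u := rfl

lemma pn_eq_norm (u : P) : pn u = ‖(WithLp.equiv 2 (E × E)).symm u‖ := by
  rw [WithLp.prod_norm_eq_of_L2]
  rfl

lemma pn_nonneg (u : P) : 0 ≤ pn u := Real.sqrt_nonneg _

lemma pn_zero : pn (0 : P) = 0 := by simp [pn]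

lemma pn_add (u v : P) : pn (u + v) ≤ pn u + pn v := by
  simp only [pn_eq_norm, WithLp.equiv_symm_apply, WithLp.toLp_add]
  exact norm_add_le _ _

lemma pn_smul (c : ℝ) (u : P) : pn (c • u) = |c| * pn u := by
  simp only [pn_eq_norm, WithLp.equiv_symm_apply, WithLp.toLp_smul, norm_smul, Real.norm_eq_abs]

lemma pn_mono {a b : P} (h1 : ‖a.1‖ ≤ ‖b.1‖) (h2 : ‖a.2‖ ≤ ‖b.2‖) : pn a ≤ pn b := by
  apply Real.sqrt_le_sqrt
  have := norm_nonneg a.1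
  have := norm_nonneg a.2
  nlinarith

lemma fst_le_pn (u : P) : ‖u.1‖ ≤ pn u := by
  rw [show ‖u.1‖ = pn (u.1, 0) by simp [pn]]
  exact pn_mono (by simp) (by simp)

lemma snd_le_pn (u : P) : ‖u.2‖ ≤ pn u := by
  rw [show ‖u.2‖ = pn ((0 : E), u.2) by simp [pn]]
  exact pn_mono (by simp) (by simp)

lemma pn_le_add (u : P) : pn u ≤ ‖u.1‖ + ‖u.2‖ := by
  rw [show u = (u.1, (0:E)) + ((0:E), u.2) by simp]
  refine (pn_add _ _).trans (by simp [pn])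

lemma pn_swap (a b : E) : pn (a, b) = pn (b, a) := by simp [pn, add_comm]

lemma pn_pair {a b : E} {x y : E} (hx : ‖x‖ ≤ ‖a‖) (hy : ‖y‖ ≤ ‖b‖) (c : ℝ) (hc : 0 ≤ c) :
    pn (c • x, c • y) ≤ c * pn (a, b) := by
  have : (c • x, c • y) = c • ((x, y) : P) := rfl
  rw [this, pn_smul, abs_of_nonneg hc]
  exact mul_le_mul_of_nonneg_left (pn_mono hx hy) hc

lemma pn_snd (w : E) : pn ((0 : E), w) = ‖w‖ := by simp [pn]

lemma pn_fst (w : E) : pn (w, (0 : E)) = ‖w‖ := by simp [pn]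


variable {U : Euc (Fin d) → ℝ}

lemma contDiff_gradient (hU : ContDiff ℝ 2 U) : ContDiff ℝ 1 (gradient U) := by
  have h1 : ContDiff ℝ 1 (fderiv ℝ U) := hU.fderiv_right (by norm_num)
  have h2 : gradient U = fun x => (InnerProductSpace.toDual ℝ E).symm (fderiv ℝ U x) := rfl
  rw [h2]
  exact (InnerProductSpace.toDual ℝ E).symm.contDiff.comp h1

lemma hasFDerivAt_gradient (hU : ContDiff ℝ 2 U) (x : E) :
    HasFDerivAt (gradient U) (hess U x) x :=
  (((contDiff_gradient hU).differentiable one_ne_zero) x).hasFDerivAt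

lemma verletInv_verlet (δ : ℝ) (w : P) : verletInv U δ (verlet U δ w) = w := by
  have h1 : (verlet U δ w).1 - δ • (verlet U δ w).2
      - (δ ^ 2 / 2) • gradient U (verlet U δ w).1 = w.1 := by
    simp only [verlet]
    module
  have h2 : verletInv U δ (verlet U δ w)
      = ((verlet U δ w).1 - δ • (verlet U δ w).2
          - (δ ^ 2 / 2) • gradient U (verlet U δ w).1,
        (verlet U δ w).2 + (δ / 2) • (gradient U (verlet U δ w).1 +
          gradient U ((verlet U δ w).1 - δ • (verlet U δ w).2
            - (δ ^ 2 / 2) • gradient U (verlet U δ w).1))) := rfl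
  rw [h2, h1]
  apply Prod.ext
  · rfl
  · show (verlet U δ w).2 + (δ / 2) • (gradient U (verlet U δ w).1 + gradient U w.1) = w.2
    simp only [verlet]
    module


lemma pn_pair' {x y a b : E} {c : ℝ} (hc : 0 ≤ c)
    (hx : ‖x‖ ≤ c * ‖a‖) (hy : ‖y‖ ≤ c * ‖b‖) : pn (x, y) ≤ c * pn (a, b) := by
  have h1 : pn (x, y) ≤ pn (c • a, c • b) := by
    apply pn_mono <;> simp only [norm_smul, Real.norm_eq_abs, abs_of_nonneg hc] <;> assumption
  have h2 : pn (c • a, c • b) = c * pn (a, b) := by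
    rw [show ((c • a, c • b) : P) = c • ((a, b) : P) from rfl, pn_smul, abs_of_nonneg hc]
  linarith

lemma contr_apply {A : Euc (Fin d) →L[ℝ] Euc (Fin d)} (hA : ‖A‖ ≤ 1) (x : E) :
    ‖A x‖ ≤ ‖x‖ :=
  (A.le_opNorm x).trans (by nlinarith [norm_nonneg x, A.opNorm_nonneg])

open ContinuousLinearMap in
/-- derivative of the first component of `verletInv`. -/
def dIn (δ : ℝ) (A : Euc (Fin d) →L[ℝ] Euc (Fin d)) : P →L[ℝ] E :=
  fst ℝ E E - δ • snd ℝ E E - (δ ^ 2 / 2) • (A.comp (fst ℝ E E))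

open ContinuousLinearMap in
/-- derivative of `verletInv` with Hessians `A` (at the point) and `A'` (at the image). -/
def linv (δ : ℝ) (A A' : Euc (Fin d) →L[ℝ] Euc (Fin d)) : P →L[ℝ] P :=
  (dIn δ A).prod (snd ℝ E E + (δ / 2) • (A.comp (fst ℝ E E) + A'.comp (dIn δ A)))

lemma dIn_apply (δ : ℝ) (A : Euc (Fin d) →L[ℝ] Euc (Fin d)) (u : P) :
    dIn δ A u = u.1 - δ • u.2 - (δ ^ 2 / 2) • A u.1 := by
  simp [dIn]

lemma linv_apply (δ : ℝ) (A A' : Euc (Fin d) →L[ℝ] Euc (Fin d)) (u : P) :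
    linv δ A A' u = (u.1 - δ • u.2 - (δ ^ 2 / 2) • A u.1,
      u.2 + (δ / 2) • (A u.1 + A' (u.1 - δ • u.2 - (δ ^ 2 / 2) • A u.1))) := by
  simp [linv, dIn_apply, ContinuousLinearMap.prod_apply]

lemma hasFDerivAt_verletInv (hU : ContDiff ℝ 2 U) (δ : ℝ) (p : P) :
    HasFDerivAt (verletInv U δ)
      (linv δ (hess U p.1) (hess U (p.1 - δ • p.2 - (δ ^ 2 / 2) • gradient U p.1))) p := by
  have hg1 : HasFDerivAt (fun w : P => gradient U w.1)
      ((hess U p.1).comp (ContinuousLinearMap.fst ℝ E E)) p :=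
    (hasFDerivAt_gradient hU p.1).comp p hasFDerivAt_fst
  have h1 : HasFDerivAt (fun w : P => w.1 - δ • w.2 - (δ ^ 2 / 2) • gradient U w.1)
      (dIn δ (hess U p.1)) p :=
    (hasFDerivAt_fst.sub (hasFDerivAt_snd.const_smul δ)).sub (hg1.const_smul (δ ^ 2 / 2))
  have hg2 : HasFDerivAt
      (fun w : P => gradient U (w.1 - δ • w.2 - (δ ^ 2 / 2) • gradient U w.1))
      ((hess U (p.1 - δ • p.2 - (δ ^ 2 / 2) • gradient U p.1)).comp (dIn δ (hess U p.1))) p :=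
    (hasFDerivAt_gradient hU _).comp p h1
  have h2 : HasFDerivAt (fun w : P => w.2 + (δ / 2) • (gradient U w.1 +
        gradient U (w.1 - δ • w.2 - (δ ^ 2 / 2) • gradient U w.1)))
      (ContinuousLinearMap.snd ℝ E E + (δ / 2) • ((hess U p.1).comp (ContinuousLinearMap.fst ℝ E E)
        + (hess U (p.1 - δ • p.2 - (δ ^ 2 / 2) • gradient U p.1)).comp (dIn δ (hess U p.1)))) p :=
    hasFDerivAt_snd.add ((hg1.add hg2).const_smul (δ / 2))
  exact h1.prodMk h2

/-- The model block map. -/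
def mM (s : ℝ) (α β ζ : Euc (Fin d) →L[ℝ] Euc (Fin d)) (u : P) : P :=
  (u.1 - (s ^ 2 / 2) • α u.1 - s • u.2, s • β u.1 + u.2 - (s ^ 2 / 2) • ζ u.2)


lemma nsmul_le {c b : ℝ} {X : Euc (Fin d) →L[ℝ] Euc (Fin d)} (hc : 0 ≤ c) (hX : ‖X‖ ≤ b) :
    ‖c • X‖ ≤ c * b := by
  refine (ContinuousLinearMap.opNorm_smul_le c X).trans ?_
  rw [Real.norm_eq_abs, abs_of_nonneg hc]
  exact mul_le_mul_of_nonneg_left hX hc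

lemma step_key {δ s : ℝ} (hδ : 0 < δ) (hs : 0 ≤ s)
    {A A' α β ζ : Euc (Fin d) →L[ℝ] Euc (Fin d)}
    (hA : ‖A‖ ≤ 1) (hA' : ‖A'‖ ≤ 1) (hα : ‖α‖ ≤ 1) (hβ : ‖β‖ ≤ 1) (hζ : ‖ζ‖ ≤ 1) :
    ∃ α' β' ζ' : Euc (Fin d) →L[ℝ] Euc (Fin d), ‖α'‖ ≤ 1 ∧ ‖β'‖ ≤ 1 ∧ ‖ζ'‖ ≤ 1 ∧
      ∀ u : P, pn (mM s α β ζ (linv δ A A' u) - mM (s + δ) α' β' ζ' u) ≤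
        (δ*s^2/2 + δ^2*s/2 + δ^2*s^2/4 + δ^3*s/4 + δ^3/4*(1+s^2/2)) * pn u := by
  have hsp : 0 < s + δ := by linarith
  have hAA : ‖A + A'‖ ≤ 2 := (norm_add_le _ _).trans (by linarith)
  refine ⟨(2/(s+δ)^2) • ((s^2/2) • α + (δ*s/2) • (A + A') + (δ^2/2) • A),
    (1/(s+δ)) • (s • β + (δ/2) • (A + A')),
    (2/(s+δ)^2) • ((s^2/2) • ζ + (δ*s) • β + (δ^2/2) • A'), ?_, ?_, ?_, ?_⟩
  · have e1 : ‖(s^2/2) • α + (δ*s/2) • (A + A') + (δ^2/2) • A‖ ≤ s^2/2*1 + δ*s/2*2 + δ^2/2*1 := by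
      refine (norm_add_le _ _).trans (add_le_add ((norm_add_le _ _).trans (add_le_add
        (nsmul_le (by positivity) hα) (nsmul_le (by positivity) hAA)))
        (nsmul_le (by positivity) hA))
    refine (nsmul_le (c := 2/(s+δ)^2) (by positivity) e1).trans ?_
    rw [div_mul_eq_mul_div, div_le_one (by positivity)]; nlinarith
  · have e1 : ‖s • β + (δ/2) • (A + A')‖ ≤ s * 1 + δ/2*2 := by
      exact (norm_add_le _ _).trans (add_le_add (nsmul_le hs hβ)
        (nsmul_le (by positivity) hAA))
    refine (nsmul_le (c := 1/(s+δ)) (by positivity) e1).trans ?_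
    rw [div_mul_eq_mul_div, div_le_one hsp]; nlinarith
  · have e1 : ‖(s^2/2) • ζ + (δ*s) • β + (δ^2/2) • A'‖ ≤ s^2/2*1 + δ*s*1 + δ^2/2*1 := by
      refine (norm_add_le _ _).trans (add_le_add ((norm_add_le _ _).trans (add_le_add
        (nsmul_le (by positivity) hζ) (nsmul_le (by positivity) hβ)))
        (nsmul_le (by positivity) hA'))
    refine (nsmul_le (c := 2/(s+δ)^2) (by positivity) e1).trans ?_
    rw [div_mul_eq_mul_div, div_le_one (by positivity)]; nlinarith
  intro u
  obtain ⟨x, v⟩ := u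
  have key : mM s α β ζ (linv δ A A' (x, v))
      - mM (s + δ) ((2/(s+δ)^2) • ((s^2/2) • α + (δ*s/2) • (A + A') + (δ^2/2) • A))
        ((1/(s+δ)) • (s • β + (δ/2) • (A + A')))
        ((2/(s+δ)^2) • ((s^2/2) • ζ + (δ*s) • β + (δ^2/2) • A')) (x, v) =
      ((δ*s^2/2) • α v, (-(δ*s^2/4)) • (ζ (A x) + ζ (A' x)))
      + ((s*δ^2/2) • A' v, (-(s*δ^2/2)) • β (A x))
      + ((δ^2*s^2/4) • α (A x), (δ^2*s^2/4) • ζ (A' v))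
      + ((s*δ^3/4) • A' (A x), 0)
      + (0, (-(δ^3/4)) • A' (A x) + (δ^3*s^2/8) • ζ (A' (A x))) := by
    rw [linv_apply]
    simp only [mM, ContinuousLinearMap.smul_apply, ContinuousLinearMap.add_apply,
      map_add, map_sub, _root_.map_smul]
    rw [Prod.ext_iff]
    have h2 : (2:ℝ)/(s+δ)^2 * ((s+δ)^2/2) = 1 := by field_simp
    have h1 : (1:ℝ)/(s+δ) * (s+δ) = 1 := by field_simp
    constructor
    · show _ = _
      simp only [Prod.fst_add, Prod.fst_sub]
      match_scalars
      all_goals (field_simp; try ring)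
      all_goals tauto
    · show _ = _
      simp only [Prod.snd_add, Prod.snd_sub]
      match_scalars
      all_goals (field_simp; try ring)
      all_goals tauto
  rw [key]
  have hx1 : ‖x‖ = ‖((x, v) : P).1‖ := rfl
  have B1 : pn ((δ*s^2/2) • α v, (-(δ*s^2/4)) • (ζ (A x) + ζ (A' x))) ≤ (δ*s^2/2) * pn (x, v) := by
    rw [← pn_swap v x]
    refine pn_pair' (c := δ*s^2/2) (by positivity) ?_ ?_
    · rw [norm_smul, Real.norm_eq_abs, abs_of_nonneg (by positivity)]
      exact mul_le_mul_of_nonneg_left (contr_apply hα v) (by positivity)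
    · rw [norm_smul, Real.norm_eq_abs, abs_neg, abs_of_nonneg (by positivity)]
      have := (norm_add_le (ζ (A x)) (ζ (A' x))).trans (add_le_add
        ((contr_apply hζ _).trans (contr_apply hA x))
        ((contr_apply hζ _).trans (contr_apply hA' x)))
      nlinarith [norm_nonneg x,
        mul_le_mul_of_nonneg_left this (show (0:ℝ) ≤ δ*s^2/4 by positivity)]
  have B2 : pn ((s*δ^2/2) • A' v, (-(s*δ^2/2)) • β (A x)) ≤ (s*δ^2/2) * pn (x, v) := by
    rw [← pn_swap v x]
    refine pn_pair' (c := s*δ^2/2) (by positivity) ?_ ?_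
    · rw [norm_smul, Real.norm_eq_abs, abs_of_nonneg (by positivity)]
      exact mul_le_mul_of_nonneg_left (contr_apply hA' v) (by positivity)
    · rw [norm_smul, Real.norm_eq_abs, abs_neg, abs_of_nonneg (by positivity)]
      exact mul_le_mul_of_nonneg_left ((contr_apply hβ _).trans (contr_apply hA x))
        (by positivity)
  have B3 : pn ((δ^2*s^2/4) • α (A x), (δ^2*s^2/4) • ζ (A' v)) ≤ (δ^2*s^2/4) * pn (x, v) := by
    refine pn_pair' (c := δ^2*s^2/4) (by positivity) ?_ ?_
    · rw [norm_smul, Real.norm_eq_abs, abs_of_nonneg (by positivity)]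
      exact mul_le_mul_of_nonneg_left ((contr_apply hα _).trans (contr_apply hA x))
        (by positivity)
    · rw [norm_smul, Real.norm_eq_abs, abs_of_nonneg (by positivity)]
      exact mul_le_mul_of_nonneg_left ((contr_apply hζ _).trans (contr_apply hA' v))
        (by positivity)
  have B4 : pn (((s*δ^3/4) • A' (A x), (0:E)) : P) ≤ (s*δ^3/4) * pn (x, v) := by
    rw [pn_fst, norm_smul, Real.norm_eq_abs, abs_of_nonneg (by positivity)]
    have h := ((contr_apply hA' _).trans (contr_apply hA x)).trans (fst_le_pn (x, v))
    exact mul_le_mul_of_nonneg_left h (by positivity)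
  have B5 : pn (((0:E), (-(δ^3/4)) • A' (A x) + (δ^3*s^2/8) • ζ (A' (A x))) : P) ≤
      (δ^3/4*(1+s^2/2)) * pn (x, v) := by
    rw [pn_snd]
    have h1 : ‖(-(δ^3/4)) • A' (A x)‖ ≤ (δ^3/4) * ‖x‖ := by
      rw [norm_smul, Real.norm_eq_abs, abs_neg, abs_of_nonneg (by positivity)]
      exact mul_le_mul_of_nonneg_left ((contr_apply hA' _).trans (contr_apply hA x))
        (by positivity)
    have h2 : ‖(δ^3*s^2/8) • ζ (A' (A x))‖ ≤ (δ^3*s^2/8) * ‖x‖ := by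
      rw [norm_smul, Real.norm_eq_abs, abs_of_nonneg (by positivity)]
      exact mul_le_mul_of_nonneg_left (((contr_apply hζ _).trans (contr_apply hA' _)).trans
        (contr_apply hA x)) (by positivity)
    have h3 := (norm_add_le _ _).trans (add_le_add h1 h2)
    have h4 : ‖x‖ ≤ pn (x, v) := fst_le_pn (x, v)
    nlinarith [norm_nonneg x, pn_nonneg ((x,v) : P),
      mul_le_mul_of_nonneg_left h4 (show (0:ℝ) ≤ δ^3/4*(1+s^2/2) by positivity)]
  refine le_trans (le_trans (pn_add _ _) (add_le_add (le_trans (pn_add _ _)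
    (add_le_add (le_trans (pn_add _ _) (add_le_add (le_trans (pn_add _ _)
    (add_le_add B1 B2)) B3)) B4)) B5)) ?_
  have : (δ*s^2/2) * pn (x,v) + (s*δ^2/2) * pn (x,v) + (δ^2*s^2/4) * pn (x,v)
      + (s*δ^3/4) * pn (x,v) + (δ^3/4*(1+s^2/2)) * pn (x,v)
      = (δ*s^2/2 + δ^2*s/2 + δ^2*s^2/4 + δ^3*s/4 + δ^3/4*(1+s^2/2)) * pn (x,v) := by ring
  linarith


lemma linv_pn {δ : ℝ} (hδ : 0 < δ) {A A' : Euc (Fin d) →L[ℝ] Euc (Fin d)}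
    (hA : ‖A‖ ≤ 1) (hA' : ‖A'‖ ≤ 1) (u : P) :
    pn (linv δ A A' u) ≤ (1 + δ + δ^2/2 + δ^3/4) * pn u := by
  obtain ⟨x, v⟩ := u
  have key : linv δ A A' (x, v) = (x, v) + ((-δ)•v, (δ/2)•(A x + A' x))
      + ((-(δ^2/2))•A x, (-(δ^2/2))•A' v) + ((0:E), (-(δ^3/4))•A' (A x)) := by
    rw [linv_apply]
    simp only [map_add, map_sub, _root_.map_smul, Prod.mk_add_mk, Prod.ext_iff]
    constructor
    · show _ = _
      match_scalars <;> ring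
    · show _ = _
      match_scalars <;> ring
  rw [key]
  have B1 : pn (((-δ)•v, (δ/2)•(A x + A' x)) : P) ≤ δ * pn (x, v) := by
    rw [← pn_swap v x]
    refine pn_pair' (c := δ) hδ.le ?_ ?_
    · rw [norm_smul, Real.norm_eq_abs, abs_neg, abs_of_nonneg hδ.le]
    · rw [norm_smul, Real.norm_eq_abs, abs_of_nonneg (by positivity)]
      have := (norm_add_le (A x) (A' x)).trans (add_le_add (contr_apply hA x) (contr_apply hA' x))
      nlinarith [norm_nonneg x]
  have B2 : pn (((-(δ^2/2))•A x, (-(δ^2/2))•A' v) : P) ≤ (δ^2/2) * pn (x, v) := by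
    refine pn_pair' (c := δ^2/2) (by positivity) ?_ ?_
    · rw [norm_smul, Real.norm_eq_abs, abs_neg, abs_of_nonneg (by positivity)]
      exact mul_le_mul_of_nonneg_left (contr_apply hA x) (by positivity)
    · rw [norm_smul, Real.norm_eq_abs, abs_neg, abs_of_nonneg (by positivity)]
      exact mul_le_mul_of_nonneg_left (contr_apply hA' v) (by positivity)
  have B3 : pn (((0:E), (-(δ^3/4))•A' (A x)) : P) ≤ (δ^3/4) * pn (x, v) := by
    rw [pn_snd, norm_smul, Real.norm_eq_abs, abs_neg, abs_of_nonneg (by positivity)]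
    have h := ((contr_apply hA' _).trans (contr_apply hA x)).trans (fst_le_pn (x, v))
    exact mul_le_mul_of_nonneg_left h (by positivity)
  refine le_trans (le_trans (pn_add _ _) (add_le_add (le_trans (pn_add _ _)
    (add_le_add (pn_add _ _) B2)) B3)) ?_
  have : pn ((x,v) : P) + δ * pn ((x,v) : P) + (δ^2/2) * pn ((x,v) : P) + (δ^3/4) * pn ((x,v) : P)
      = (1 + δ + δ^2/2 + δ^3/4) * pn ((x,v) : P) := by ring
  linarith [B1]

lemma mM_pn {s : ℝ} (hs : 0 ≤ s) {α β ζ : Euc (Fin d) →L[ℝ] Euc (Fin d)}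
    (hα : ‖α‖ ≤ 1) (hβ : ‖β‖ ≤ 1) (hζ : ‖ζ‖ ≤ 1) (u : P) :
    pn (mM s α β ζ u) ≤ (1 + s + s^2/2) * pn u := by
  obtain ⟨x, v⟩ := u
  have key : mM s α β ζ (x, v) = (x, v) + ((-s)•v, s•β x)
      + ((-(s^2/2))•α x, (-(s^2/2))•ζ v) := by
    simp only [mM, Prod.mk_add_mk, Prod.ext_iff]
    constructor
    · show _ = _
      match_scalars <;> ring
    · show _ = _
      match_scalars <;> ring
  rw [key]
  have B1 : pn (((-s)•v, s•β x) : P) ≤ s * pn (x, v) := by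
    rw [← pn_swap v x]
    refine pn_pair' (c := s) hs ?_ ?_
    · rw [norm_smul, Real.norm_eq_abs, abs_neg, abs_of_nonneg hs]
    · rw [norm_smul, Real.norm_eq_abs, abs_of_nonneg hs]
      exact mul_le_mul_of_nonneg_left (contr_apply hβ x) hs
  have B2 : pn (((-(s^2/2))•α x, (-(s^2/2))•ζ v) : P) ≤ (s^2/2) * pn (x, v) := by
    refine pn_pair' (c := s^2/2) (by positivity) ?_ ?_
    · rw [norm_smul, Real.norm_eq_abs, abs_neg, abs_of_nonneg (by positivity)]
      exact mul_le_mul_of_nonneg_left (contr_apply hα x) (by positivity)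
    · rw [norm_smul, Real.norm_eq_abs, abs_neg, abs_of_nonneg (by positivity)]
      exact mul_le_mul_of_nonneg_left (contr_apply hζ v) (by positivity)
  refine le_trans (le_trans (pn_add _ _) (add_le_add (pn_add _ _) B2)) ?_
  have : pn ((x,v) : P) + s * pn ((x,v) : P) + (s^2/2) * pn ((x,v) : P)
      = (1 + s + s^2/2) * pn ((x,v) : P) := by ring
  linarith [B1]

/-- Error accumulation sequence. -/
def epsRec (δ : ℝ) : ℕ → ℝ
  | 0 => 0
  | (j+1) => (1 + δ + δ^2/2 + δ^3/4) * epsRec δ j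
      + (δ*(δ*j)^2/2 + δ^2*(δ*j)/2 + δ^2*(δ*j)^2/4 + δ^3*(δ*j)/4 + δ^3/4*(1+(δ*j)^2/2))

lemma epsRec_nonneg {δ : ℝ} (hδ : 0 < δ) : ∀ j, 0 ≤ epsRec δ j
  | 0 => le_refl _
  | (j+1) => by
      have ih := epsRec_nonneg hδ j
      have hj : (0:ℝ) ≤ (j:ℝ) := Nat.cast_nonneg j
      simp only [epsRec]
      positivity

lemma bernoulli_up {y : ℝ} (hy : 0 ≤ y) : ∀ n : ℕ, (1+y)^n * (1 - n*y) ≤ 1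
  | 0 => by simp
  | (n+1) => by
      have ih := bernoulli_up hy n
      have h0 : (0:ℝ) ≤ (1+y)^n := by positivity
      have key : (1+y)*(1-((n:ℝ)+1)*y) ≤ 1 - (n:ℝ)*y := by nlinarith [sq_nonneg y, (Nat.cast_nonneg n : (0:ℝ) ≤ (n:ℝ))]
      calc (1+y)^(n+1) * (1-((n+1:ℕ):ℝ)*y) = (1+y)^n * ((1+y)*(1-((n:ℝ)+1)*y)) := by
            push_cast; ring
        _ ≤ (1+y)^n * (1 - (n:ℝ)*y) := mul_le_mul_of_nonneg_left key h0
        _ ≤ 1 := ih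

lemma epsRec_pow_le {δ : ℝ} (hδ : 0 < δ) {K : ℕ} (hδK : δ * K ≤ 1/10) :
    ∀ j, j ≤ K → epsRec δ j ≤ (1 + (421/400)*δ)^j * (δ^3 * ((26/100) * j^3))
  | 0, _ => by simp [epsRec]
  | (j+1), hjK => by
      have hjK' : (j:ℝ) + 1 ≤ (K:ℝ) := by exact_mod_cast hjK
      have hj0 : (0:ℝ) ≤ (j:ℝ) := Nat.cast_nonneg j
      have hδj : δ * j ≤ 1/10 := by nlinarith
      have hδ1 : δ ≤ 1/10 := by nlinarith
      have ih := epsRec_pow_le hδ hδK j (Nat.le_of_succ_le hjK)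
      have hρ : (1 + δ + δ^2/2 + δ^3/4) ≤ 1 + (421/400)*δ := by nlinarith
      have hy0 : (0:ℝ) ≤ 1 + (421/400)*δ := by positivity
      have hstep : δ*(δ*j)^2/2 + δ^2*(δ*j)/2 + δ^2*(δ*j)^2/4 + δ^3*(δ*j)/4
          + δ^3/4*(1+(δ*j)^2/2) ≤ δ^3 * ((26/100) * (3*(j:ℝ)^2 + 3*(j:ℝ) + 1)) := by
        have e1 : δ*(j:ℝ)^2 ≤ (j:ℝ)/10 := by nlinarith
        have e3 : (δ*(j:ℝ))^2 ≤ 1/100 := by nlinarith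
        have e4 : δ*(j:ℝ) ≤ (j:ℝ)/10 := by nlinarith
        have c3 : (0:ℝ) ≤ δ^3 := by positivity
        nlinarith [mul_le_mul_of_nonneg_left e1 c3, mul_le_mul_of_nonneg_left e3 c3,
          mul_le_mul_of_nonneg_left e4 c3]
      have hone : (1:ℝ) ≤ (1 + (421/400)*δ)^(j+1) := one_le_pow₀ (by nlinarith)
      have hA1 : (1 + δ + δ^2/2 + δ^3/4) * epsRec δ j ≤
          (1 + (421/400)*δ)^(j+1) * (δ^3 * ((26/100) * (j:ℝ)^3)) := by
        calc (1 + δ + δ^2/2 + δ^3/4) * epsRec δ j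
            ≤ (1 + (421/400)*δ) * ((1 + (421/400)*δ)^j * (δ^3 * ((26/100) * (j:ℝ)^3))) :=
              mul_le_mul hρ ih (epsRec_nonneg hδ j) hy0
          _ = (1 + (421/400)*δ)^(j+1) * (δ^3 * ((26/100) * (j:ℝ)^3)) := by ring
      have hA2 : δ*(δ*j)^2/2 + δ^2*(δ*j)/2 + δ^2*(δ*j)^2/4 + δ^3*(δ*j)/4
          + δ^3/4*(1+(δ*j)^2/2) ≤
          (1 + (421/400)*δ)^(j+1) * (δ^3 * ((26/100) * (3*(j:ℝ)^2 + 3*(j:ℝ) + 1))) :=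
        hstep.trans (le_mul_of_one_le_left (by positivity) hone)
      have hsum : (1 + (421/400)*δ)^(j+1) * (δ^3 * ((26/100) * (j:ℝ)^3))
          + (1 + (421/400)*δ)^(j+1) * (δ^3 * ((26/100) * (3*(j:ℝ)^2 + 3*(j:ℝ) + 1)))
          = (1 + (421/400)*δ)^(j+1) * (δ^3 * ((26/100) * ((j:ℝ)+1)^3)) := by ring
      have hc : ((j+1 : ℕ):ℝ) = (j:ℝ) + 1 := by push_cast; ring
      show (1 + δ + δ^2/2 + δ^3/4) * epsRec δ j
          + (δ*(δ*j)^2/2 + δ^2*(δ*j)/2 + δ^2*(δ*j)^2/4 + δ^3*(δ*j)/4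
            + δ^3/4*(1+(δ*j)^2/2))
          ≤ (1 + (421/400)*δ)^(j+1) * (δ^3 * ((26/100) * ((j+1:ℕ):ℝ)^3))
      rw [hc]
      linarith
lemma epsRec_final {δ : ℝ} (hδ : 0 < δ) {K : ℕ} (hδK : δ * K ≤ 1/10) :
    epsRec δ K ≤ (δ*K)^3 / 3 := by
  have h := epsRec_pow_le hδ hδK K le_rfl
  have hy : (0:ℝ) ≤ (421/400)*δ := by positivity
  have hb := bernoulli_up hy K
  have hK0 : (0:ℝ) ≤ (K:ℝ) := Nat.cast_nonneg K
  have hKy : (K:ℝ) * ((421/400)*δ) ≤ 421/4000 := by nlinarith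
  have hpos : (0:ℝ) < 1 - (K:ℝ)*((421/400)*δ) := by linarith
  have hpow : (1 + (421/400)*δ)^K ≤ 4000/3579 := by
    have h2 : (1 + (421/400)*δ)^K ≤ 1 / (1 - (K:ℝ)*((421/400)*δ)) := by
      rw [le_div_iff₀ hpos]; linarith
    refine h2.trans ?_
    rw [div_le_div_iff₀ hpos (by norm_num)]
    linarith
  have hnn : (0:ℝ) ≤ δ^3 * ((26/100) * (K:ℝ)^3) := by positivity
  calc epsRec δ K ≤ (1 + (421/400)*δ)^K * (δ^3*((26/100)*(K:ℝ)^3)) := h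
    _ ≤ (4000/3579) * (δ^3*((26/100)*(K:ℝ)^3)) := mul_le_mul_of_nonneg_right hpow hnn
    _ ≤ (δ*K)^3/3 := by nlinarith [pow_nonneg (mul_nonneg hδ.le hK0) 3]

lemma jacobian_rec {U : Euc (Fin d) → ℝ} (hU : ContDiff ℝ 2 U)
    (hHess : ∀ x, ‖hess U x‖ ≤ 1) {δ : ℝ} (hδ : 0 < δ) (z : P) :
    ∀ j : ℕ, ∃ (D : P →L[ℝ] P) (α β ζ : Euc (Fin d) →L[ℝ] Euc (Fin d)),
      ‖α‖ ≤ 1 ∧ ‖β‖ ≤ 1 ∧ ‖ζ‖ ≤ 1 ∧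
      HasFDerivAt ((verletInv U δ)^[j]) D ((verlet U δ)^[j] z) ∧
      ∀ u, pn (D u - mM (δ*(j:ℝ)) α β ζ u) ≤ epsRec δ j * pn u
  | 0 => by
      refine ⟨ContinuousLinearMap.id ℝ P, 0, 0, 0, by rw [norm_zero]; norm_num,
        by rw [norm_zero]; norm_num, by rw [norm_zero]; norm_num, ?_, ?_⟩
      · simpa using (hasFDerivAt_id ((verlet U δ)^[0] z))
      · intro u
        have h0 : mM (δ*((0:ℕ):ℝ)) (0 : Euc (Fin d) →L[ℝ] Euc (Fin d)) 0 0 u = u := by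
          simp [mM]
        rw [h0]
        simp [epsRec, pn_zero]
  | (j+1) => by
      obtain ⟨D, α, β, ζ, hα, hβ, hζ, hD, hErr⟩ := jacobian_rec hU hHess hδ z j
      set p := (verlet U δ)^[j+1] z with hp
      have hpq : verletInv U δ p = (verlet U δ)^[j] z := by
        rw [hp, Function.iterate_succ_apply']
        exact verletInv_verlet δ _
      have hL := hasFDerivAt_verletInv hU δ p
      set A := hess U p.1 with hA
      set A' := hess U (p.1 - δ • p.2 - (δ ^ 2 / 2) • gradient U p.1) with hA'
      have hs0 : (0:ℝ) ≤ δ * (j:ℝ) := by positivity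
      obtain ⟨α', β', ζ', hα', hβ', hζ', hstep⟩ :=
        step_key (s := δ*(j:ℝ)) hδ hs0 (hHess _) (hHess _) hα hβ hζ
      refine ⟨D.comp (linv δ A A'), α', β', ζ', hα', hβ', hζ', ?_, ?_⟩
      · have h1 : HasFDerivAt ((verletInv U δ)^[j]) D (verletInv U δ p) := by
          rw [hpq]; exact hD
        have h2 := h1.comp p hL
        rw [← Function.iterate_succ] at h2
        exact h2
      · intro u
        have hcast : δ * ((j+1 : ℕ):ℝ) = δ*(j:ℝ) + δ := by push_cast; ring
        have happ : D.comp (linv δ A A') u = D (linv δ A A' u) := rfl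
        have hdec : D.comp (linv δ A A') u - mM (δ*((j+1:ℕ):ℝ)) α' β' ζ' u
            = (D (linv δ A A' u) - mM (δ*(j:ℝ)) α β ζ (linv δ A A' u))
              + (mM (δ*(j:ℝ)) α β ζ (linv δ A A' u) - mM (δ*(j:ℝ)+δ) α' β' ζ' u) := by
          rw [hcast, happ]; abel
        calc pn (D.comp (linv δ A A') u - mM (δ*((j+1:ℕ):ℝ)) α' β' ζ' u)
            = pn ((D (linv δ A A' u) - mM (δ*(j:ℝ)) α β ζ (linv δ A A' u))
              + (mM (δ*(j:ℝ)) α β ζ (linv δ A A' u) - mM (δ*(j:ℝ)+δ) α' β' ζ' u)) := by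
              rw [hdec]
          _ ≤ pn (D (linv δ A A' u) - mM (δ*(j:ℝ)) α β ζ (linv δ A A' u))
              + pn (mM (δ*(j:ℝ)) α β ζ (linv δ A A' u) - mM (δ*(j:ℝ)+δ) α' β' ζ' u) :=
              pn_add _ _
          _ ≤ epsRec δ j * pn (linv δ A A' u)
              + (δ*(δ*(j:ℝ))^2/2 + δ^2*(δ*(j:ℝ))/2 + δ^2*(δ*(j:ℝ))^2/4 + δ^3*(δ*(j:ℝ))/4
                + δ^3/4*(1+(δ*(j:ℝ))^2/2)) * pn u :=
              add_le_add (hErr _) (hstep u)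
          _ ≤ epsRec δ j * ((1 + δ + δ^2/2 + δ^3/4) * pn u)
              + (δ*(δ*(j:ℝ))^2/2 + δ^2*(δ*(j:ℝ))/2 + δ^2*(δ*(j:ℝ))^2/4 + δ^3*(δ*(j:ℝ))/4
                + δ^3/4*(1+(δ*(j:ℝ))^2/2)) * pn u :=
              add_le_add (mul_le_mul_of_nonneg_left
                (linv_pn hδ (hHess _) (hHess _) u) (epsRec_nonneg hδ j)) le_rfl
          _ = epsRec δ (j+1) * pn u := by
              simp only [epsRec]
              ring

end Aux

/-- Lemma 11: structure of the Jacobian matrix of the Verlet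
integrator.  `Ψ(z) = (∇Φ_δ^{-K})∘Φ_δ^K` is represented here through the Fréchet
derivative of `Φ_δ^{-K}` at `Φ_δ^K z` (the transpose of the paper's `Ψ(z)`,
which has the same operator norm and, after transposing `α`, `β`, `ζ`, the
transposed block structure); operator-norm bounds are expressed pointwise in
the Euclidean phase-space norm. -/
theorem verlet_jacobian_structure
    {d : ℕ} (U : Euc (Fin d) → ℝ)
    (hU : ContDiff ℝ 2 U)
    (hHess : ∀ x, ‖hess U x‖ ≤ 1)
    (δ : ℝ) (hδ : 0 < δ) (K : ℕ) (hK : 0 < K)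
    (T : ℝ) (hT : T = K * δ) (hT' : T ≤ 1 / 10)
    (z : Euc (Fin d) × Euc (Fin d)) :
    ∃ α β ζ : Euc (Fin d) →L[ℝ] Euc (Fin d),
      ‖α‖ ≤ 1 ∧ ‖β‖ ≤ 1 ∧ ‖ζ‖ ≤ 1 ∧
      (∀ u : Euc (Fin d) × Euc (Fin d),
        Real.sqrt (pnormSq
          ((fderiv ℝ (fun w => (verletInv U δ)^[K] w) ((verlet U δ)^[K] z)) u
            - (u.1 - (T ^ 2 / 2) • α u.1 - T • u.2,
               T • β u.1 + u.2 - (T ^ 2 / 2) • ζ u.2))) ≤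
          T ^ 3 / 3 * Real.sqrt (pnormSq u)) ∧
      ∀ u : Euc (Fin d) × Euc (Fin d),
        Real.sqrt (pnormSq
          ((fderiv ℝ (fun w => (verletInv U δ)^[K] w) ((verlet U δ)^[K] z)) u)) ≤
          (1 + T + T ^ 2 / 2 + T ^ 3 / 3) * Real.sqrt (pnormSq u) := by
  obtain ⟨D, α, β, ζ, hα, hβ, hζ, hD, hErr⟩ := jacobian_rec hU hHess hδ z K
  have hTδ : δ * (K:ℝ) = T := by rw [hT]; ring
  have hδK : δ * (K:ℝ) ≤ 1/10 := by rw [hTδ]; exact hT'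
  have hT0 : 0 ≤ T := by rw [hT]; positivity
  have heps : epsRec δ K ≤ T^3/3 := by
    have h := epsRec_final hδ hδK
    rwa [hTδ] at h
  have hfd : fderiv ℝ (fun w => (verletInv U δ)^[K] w) ((verlet U δ)^[K] z) = D := hD.fderiv
  refine ⟨α, β, ζ, hα, hβ, hζ, ?_, ?_⟩
  · intro u
    rw [hfd, sqrt_pnormSq, sqrt_pnormSq]
    have h1 : ((u.1 - (T ^ 2 / 2) • α u.1 - T • u.2,
        T • β u.1 + u.2 - (T ^ 2 / 2) • ζ u.2) : Euc (Fin d) × Euc (Fin d)) = mM T α β ζ u := rfl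
    rw [h1]
    have h2 := hErr u
    rw [hTδ] at h2
    calc pn (D u - mM T α β ζ u) ≤ epsRec δ K * pn u := h2
      _ ≤ T^3/3 * pn u := mul_le_mul_of_nonneg_right heps (pn_nonneg u)
  · intro u
    rw [hfd, sqrt_pnormSq, sqrt_pnormSq]
    have h2 := hErr u
    rw [hTδ] at h2
    have h3 : pn (D u) ≤ pn (D u - mM T α β ζ u) + pn (mM T α β ζ u) := by
      have h := pn_add (D u - mM T α β ζ u) (mM T α β ζ u)
      simpa using h
    have h4 := mM_pn hT0 hα hβ hζ u
    have h5 : epsRec δ K * pn u ≤ T^3/3 * pn u :=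
      mul_le_mul_of_nonneg_right heps (pn_nonneg u)
    have hring : T^3/3 * pn u + (1+T+T^2/2) * pn u = (1+T+T^2/2+T^3/3) * pn u := by ring
    linarith


end GHMCPaper
end
end

section
/- Let U : ℝ^d → ℝ be C⁴ with ‖∇²U(x)‖ ≤ 1 for all x, satisfying H2 with norms N₃, N₄, and let 0 < δ ≤ 1/10. For s ≥ 0 let Φ_s denote one Verlet step of size s and F_H(x,v) = (v, −∇U(x)). Then for all z = (x,v) ∈ ℝ^{2d} and all s ∈ [0, δ]: |∂_s Φ_s(z) − F_H(Φ_s(z))|² ≤ s⁴ ( (1/3)|v|² + (1/7)|∇U(x)|² + (1/7)N₃(v)⁴ + (1/140)N₃(∇U(x))⁴ ). -/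
set_option autoImplicit false

open MeasureTheory Real
open scoped RealInnerProductSpace

noncomputable section

namespace GHMCPaper

variable {ι : Type*} [Fintype ι]

variable {ι : Type*} [Fintype ι]

/-! ### Auxiliary lemmas for `verlet_flow_defect_bound` -/

lemma aux_isNorm_nonneg {N : Euc ι → ℝ} (hN : IsNorm N) (x : Euc ι) : 0 ≤ N x := by
  have h0 : N 0 = 0 := by
    have := hN.2.1 0 0
    simpa using this
  have hneg : N (-x) = N x := by
    have := hN.2.1 (-1) x
    simpa using this
  have : N 0 ≤ N x + N (-x) := by
    have := hN.1 x (-x)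
    simpa using this
  rw [h0, hneg] at this
  linarith

lemma aux_core1 (V C : ℝ) :
    (1/4)*(V + C/20)^2 ≤ (1/3)*V^2 + (1/400)*C^2 := by
  nlinarith [sq_nonneg (V - 3*C/20)]

lemma aux_core2 (a b C : ℝ) (ha : 0 ≤ a) (hb : 0 ≤ b) (hC : 0 ≤ C) :
    (1/16)*((a+b/20)^2 + C)^2 ≤ (393/2800)*C^2 + (1/7)*a^4 + (1/140)*b^4 := by
  nlinarith [sq_nonneg ((a+b/20)^2 - C), sq_nonneg (a*b), sq_nonneg (a-b), sq_nonneg (a+b),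
    sq_nonneg (a^2-b^2), sq_nonneg (a^2 - C), mul_nonneg ha hb,
    mul_nonneg (mul_nonneg ha ha) (mul_nonneg hb hb), sq_nonneg (a^2+b^2),
    mul_nonneg (mul_nonneg ha hb) (mul_nonneg hb hb),
    mul_nonneg (mul_nonneg ha ha) (mul_nonneg ha hb),
    sq_nonneg (b^2 - C), sq_nonneg (10*a^2-C), sq_nonneg (b^2/20 - C)]

lemma aux_scal1 (s V C D1 : ℝ) (hs : 0 ≤ s) (hs' : s ≤ 1/10) (hV : 0 ≤ V) (hC : 0 ≤ C)
    (hD : 0 ≤ D1) (h : D1 ≤ s^2/2*(V + s/2*C)) :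
    D1^2 ≤ s^4*((1/3)*V^2 + (1/400)*C^2) := by
  have h1 : D1 ≤ s^2/2*(V + C/20) := by
    nlinarith [mul_nonneg (mul_nonneg (mul_nonneg hs hs) hC) (sub_nonneg.2 hs')]
  have h2 : D1^2 ≤ (s^2/2*(V + C/20))^2 := by
    apply pow_le_pow_left₀ hD h1
  calc D1^2 ≤ (s^2/2*(V + C/20))^2 := h2
    _ = s^4 * ((1/4)*(V + C/20)^2) := by ring
    _ ≤ s^4 * ((1/3)*V^2 + (1/400)*C^2) := by
        apply mul_le_mul_of_nonneg_left (aux_core1 V C)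
        positivity

lemma aux_scal2 (s P a b C D2 : ℝ) (hs : 0 ≤ s) (hs' : s ≤ 1/10) (ha : 0 ≤ a) (hb : 0 ≤ b)
    (hC : 0 ≤ C) (hP : 0 ≤ P) (hPle : P ≤ a + s/2*b)
    (hD : 0 ≤ D2) (h : D2 ≤ s^2/4*(P^2 + C)) :
    D2^2 ≤ s^4*((393/2800)*C^2 + (1/7)*a^4 + (1/140)*b^4) := by
  have hP' : P ≤ a + b/20 := by
    nlinarith [mul_nonneg hb (sub_nonneg.2 hs')]
  have hPsq : P^2 ≤ (a + b/20)^2 := pow_le_pow_left₀ hP hP' 2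
  have h1 : D2 ≤ s^2/4*((a+b/20)^2 + C) := by
    nlinarith [sq_nonneg s]
  have h2 : D2^2 ≤ (s^2/4*((a+b/20)^2 + C))^2 := by
    apply pow_le_pow_left₀ hD h1
  calc D2^2 ≤ (s^2/4*((a+b/20)^2 + C))^2 := h2
    _ = s^4 * ((1/16)*((a+b/20)^2 + C)^2) := by ring
    _ ≤ s^4 * ((393/2800)*C^2 + (1/7)*a^4 + (1/140)*b^4) := by
        apply mul_le_mul_of_nonneg_left (aux_core2 a b C ha hb hC)
        positivity

lemma aux_contDiff_gradient {d : ℕ} (U : Euc (Fin d) → ℝ) (hU : ContDiff ℝ 4 U) :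
    ContDiff ℝ 3 (gradient U) :=
  ((InnerProductSpace.toDual ℝ (Euc (Fin d))).symm.toContinuousLinearEquiv.contDiff).comp
    (hU.fderiv_right (by norm_num))

lemma aux_lipschitz_gradient {d : ℕ} (U : Euc (Fin d) → ℝ) (hU : ContDiff ℝ 4 U)
    (hHess : ∀ x, ‖fderiv ℝ (gradient U) x‖ ≤ 1) (p q : Euc (Fin d)) :
    ‖gradient U p - gradient U q‖ ≤ ‖p - q‖ := by
  have hd : Differentiable ℝ (gradient U) :=
    (aux_contDiff_gradient U hU).differentiable (by norm_num)
  have := convex_univ.norm_image_sub_le_of_norm_fderiv_le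
    (f := gradient U) (C := 1)
    (fun x _ => hd x) (fun x _ => hHess x) (Set.mem_univ q) (Set.mem_univ p)
  simpa using this

/-- Taylor-type remainder bound using the H2 Hessian-Hölder condition. -/
lemma aux_taylor {d : ℕ} (G : Euc (Fin d) → Euc (Fin d)) (hd : Differentiable ℝ G)
    (N3 : Euc (Fin d) → ℝ)
    (hhom : ∀ (c : ℝ) x, N3 (c • x) = |c| * N3 x)
    (hN3nn : ∀ x, 0 ≤ N3 x)
    (hH2 : ∀ x y w, ‖(fderiv ℝ G (x + y) - fderiv ℝ G x) w‖ ≤ N3 y * N3 w)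
    (x u : Euc (Fin d)) :
    ‖G (x + u) - G x - fderiv ℝ G (x + u) u‖ ≤ N3 u ^ 2 / 2 := by
  set K := N3 u ^ 2 with hK
  set f : ℝ → Euc (Fin d) := fun t => G (x + t • u) - G x - t • (fderiv ℝ G (x + u) u) with hf
  have hf' : ∀ t : ℝ, HasDerivAt f
      (fderiv ℝ G (x + t • u) u - fderiv ℝ G (x + u) u) t := by
    intro t
    have hpath : HasDerivAt (fun t : ℝ => x + t • u) u t := by
      simpa using ((hasDerivAt_id t).smul_const u).const_add x
    have h1 : HasDerivAt (fun t : ℝ => G (x + t • u)) (fderiv ℝ G (x + t • u) u) t :=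
      (hd (x + t • u)).hasFDerivAt.comp_hasDerivAt t hpath
    have := (h1.sub_const (G x)).sub ((hasDerivAt_id t).smul_const (fderiv ℝ G (x + u) u))
    rw [one_smul] at this
    exact this
  have key : ∀ t ∈ Set.Icc (0:ℝ) 1, ‖f t‖ ≤ K * (t - t ^ 2 / 2) := by
    refine image_norm_le_of_norm_deriv_right_le_deriv_boundary
      (f' := fun t => fderiv ℝ G (x + t • u) u - fderiv ℝ G (x + u) u)
      (B := fun t => K * (t - t ^ 2 / 2)) (B' := fun t => K * (1 - t))
      ?_ (fun t _ => (hf' t).hasDerivWithinAt) ?_ ?_ ?_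
    · exact fun t _ => (hf' t).continuousAt.continuousWithinAt
    · simp [hf]
    · intro t
      have : HasDerivAt (fun t : ℝ => K * (t - t ^ 2 / 2)) (K * (1 - 2 * t ^ 1 / 2)) t :=
        ((hasDerivAt_id t).sub ((hasDerivAt_pow 2 t).div_const 2)).const_mul K
      simpa using this
    · intro t ht
      have heq : x + t • u = (x + u) + (t - 1) • u := by module
      have h0 := hH2 (x + u) ((t - 1) • u) u
      rw [← heq] at h0
      have h2 : ‖fderiv ℝ G (x + t • u) u - fderiv ℝ G (x + u) u‖ ≤ N3 ((t-1) • u) * N3 u := by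
        simpa [ContinuousLinearMap.sub_apply] using h0
      rw [hhom] at h2
      have habs : |t - 1| = 1 - t := by
        rw [abs_of_nonpos] <;> [ring; linarith [ht.2]]
      rw [habs] at h2
      calc ‖fderiv ℝ G (x + t • u) u - fderiv ℝ G (x + u) u‖ ≤ (1 - t) * N3 u * N3 u := h2
        _ ≤ K * (1 - t) := by rw [hK]; ring_nf; nlinarith [hN3nn u, ht.1, ht.2]
  calc ‖G (x + u) - G x - fderiv ℝ G (x + u) u‖ = ‖f 1‖ := by simp [hf]
    _ ≤ K * (1 - 1 ^ 2 / 2) := key 1 (by norm_num)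
    _ = N3 u ^ 2 / 2 := by rw [hK]; ring

lemma aux_deriv_verlet {d : ℕ} (U : Euc (Fin d) → ℝ) (hd : Differentiable ℝ (gradient U))
    (z : Euc (Fin d) × Euc (Fin d)) (s : ℝ) :
    deriv (fun t => verlet U t z) s =
      (z.2 - s • gradient U z.1,
       -((2:ℝ)⁻¹ • (gradient U z.1 + gradient U (verlet U s z).1))
         - (s / 2) • (fderiv ℝ (gradient U) (verlet U s z).1 (z.2 - s • gradient U z.1))) := by
  set x := z.1; set v := z.2; set g := gradient U z.1
  have h1 : ∀ t : ℝ, HasDerivAt (fun t : ℝ => x + t • v - (t ^ 2 / 2) • g)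
      (v - t • g) t := by
    intro t
    have ha : HasDerivAt (fun t : ℝ => x + t • v) v t := by
      simpa using ((hasDerivAt_id t).smul_const v).const_add x
    have hb : HasDerivAt (fun t : ℝ => (t ^ 2 / 2) • g) (t • g) t := by
      have h' : HasDerivAt (fun t : ℝ => t ^ 2 / 2) (2 * t ^ 1 / 2) t :=
        (hasDerivAt_pow 2 t).div_const 2
      have := h'.smul_const g
      simpa using this.congr_deriv (by ring_nf)
    exact ha.sub hb
  set q := x + s • v - (s ^ 2 / 2) • g with hq
  have h2 : HasDerivAt (fun t : ℝ => v - (t / 2) • (g + gradient U (x + t • v - (t ^ 2 / 2) • g)))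
      (-((2:ℝ)⁻¹ • (g + gradient U q))
        - (s / 2) • (fderiv ℝ (gradient U) q (v - s • g))) s := by
    have hG : HasDerivAt (fun t : ℝ => g + gradient U (x + t • v - (t ^ 2 / 2) • g))
        (fderiv ℝ (gradient U) q (v - s • g)) s :=
      (((hd q).hasFDerivAt.comp_hasDerivAt (f := fun t : ℝ => x + t • v - (t ^ 2 / 2) • g) s (h1 s))).const_add g
    have hc : HasDerivAt (fun t : ℝ => t / 2) ((2:ℝ)⁻¹) s := by
      simpa using (hasDerivAt_id s).div_const 2
    have := (hc.smul hG).const_sub v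
    refine this.congr_deriv ?_
    module
  have hD : HasDerivAt (fun t => verlet U t z)
      (v - s • g,
       -((2:ℝ)⁻¹ • (g + gradient U q)) - (s / 2) • (fderiv ℝ (gradient U) q (v - s • g))) s :=
    (h1 s).prodMk h2
  rw [hD.deriv]
  rfl

set_option maxHeartbeats 2000000

/-- Lemma 16: pointwise bound on the defect of the Verlet
flow with respect to the Hamiltonian vector field. -/
theorem verlet_flow_defect_bound
    {d : ℕ} (U : Euc (Fin d) → ℝ)
    (hU : ContDiff ℝ 4 U) (hHess : ∀ x, ‖hess U x‖ ≤ 1)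
    (N3 N4 : Euc (Fin d) → ℝ) (hN3 : IsNorm N3) (hN4 : IsNorm N4)
    (hH2 : H2 U N3 N4)
    (δ : ℝ) (hδ : 0 < δ) (hδ' : δ ≤ 1 / 10)
    (z : Euc (Fin d) × Euc (Fin d)) (s : ℝ) (hs : 0 ≤ s) (hs' : s ≤ δ) :
    pnormSq (deriv (fun t => verlet U t z) s - FH U (verlet U s z)) ≤
      s ^ 4 * ((1 / 3) * ‖z.2‖ ^ 2 + (1 / 7) * ‖gradient U z.1‖ ^ 2
        + (1 / 7) * N3 z.2 ^ 4 + (1 / 140) * N3 (gradient U z.1) ^ 4) := by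
  -- Notation
  have hs10 : s ≤ 1/10 := le_trans hs' hδ'
  set x := z.1 with hx
  set v := z.2 with hv
  set G := gradient U with hG
  set g := G z.1 with hg
  have hd : Differentiable ℝ G :=
    (aux_contDiff_gradient U hU).differentiable (by norm_num)
  have hHess' : ∀ p, ‖fderiv ℝ G p‖ ≤ 1 := fun p => hHess p
  have hN3nn : ∀ y, 0 ≤ N3 y := aux_isNorm_nonneg hN3
  set q : Euc (Fin d) := x + s • v - (s ^ 2 / 2) • g with hq
  have hq1 : (verlet U s z).1 = q := rfl
  set w : Euc (Fin d) := v - (s/2) • g with hw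
  have hqw : q = x + s • w := by rw [hq, hw]; module
  set H := fderiv ℝ G q with hH
  set E : Euc (Fin d) := G (x + s • w) - G x - fderiv ℝ G (x + s • w) (s • w) with hE
  set D1 : Euc (Fin d) := (s/2) • (G q - g) with hD1
  set D2 : Euc (Fin d) := (2:ℝ)⁻¹ • E + (s^2/4) • (H g) with hD2
  -- the defect equals (D1, D2)
  have hdefect : deriv (fun t => verlet U t z) s - FH U (verlet U s z) = (D1, D2) := by
    rw [aux_deriv_verlet U hd z s]
    have hFH : FH U (verlet U s z) =
        ((verlet U s z).2, -G (verlet U s z).1) := rfl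
    rw [hFH, Prod.mk_sub_mk]
    have h2 : (verlet U s z).2 = v - (s/2) • (g + G q) := by
      rw [show (verlet U s z).2 = z.2 - (s / 2) • (gradient U z.1 +
        gradient U (z.1 + s • z.2 - (s ^ 2 / 2) • gradient U z.1)) from rfl]
    rw [hq1, h2, Prod.mk.injEq]
    refine ⟨?_, ?_⟩
    · simp only [← hG, ← hv, ← hg]
      rw [hD1]; module
    · simp only [← hG, ← hv, ← hg]
      rw [hD2, hE, ← hqw, ← hH]
      have hlin1 : H (v - s • g) = H v - s • H g := by
        rw [map_sub, _root_.map_smul]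
      have hlin2 : H (s • w) = s • H v - (s^2/2) • H g := by
        rw [_root_.map_smul, hw, map_sub, _root_.map_smul]; module
      rw [hlin1, hlin2]
      module
  rw [hdefect]
  -- norm bounds
  have hnw : ‖w‖ ≤ ‖v‖ + s/2 * ‖g‖ := by
    rw [hw]
    refine le_trans (norm_sub_le _ _) ?_
    rw [norm_smul, Real.norm_eq_abs, abs_of_nonneg (by linarith : (0:ℝ) ≤ s/2)]
  have hNw : N3 w ≤ N3 v + s/2 * N3 g := by
    have h1 : w = v + (-(s/2)) • g := by rw [hw]; module
    rw [h1]
    refine le_trans (hN3.1 v _) ?_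
    rw [hN3.2.1]
    have : |(-(s/2))| = s/2 := by rw [abs_neg, abs_of_nonneg (by linarith : (0:ℝ) ≤ s/2)]
    rw [this]
  have hB1 : ‖D1‖ ≤ s^2/2 * (‖v‖ + s/2 * ‖g‖) := by
    rw [hD1, norm_smul, Real.norm_eq_abs, abs_of_nonneg (by linarith : (0:ℝ) ≤ s/2)]
    have hlip : ‖G q - g‖ ≤ ‖q - x‖ := by
      rw [hg, hx]
      exact aux_lipschitz_gradient U hU hHess' q z.1
    have hqx : ‖q - x‖ = s * ‖w‖ := by
      rw [show q - x = s • w by rw [hqw]; module, norm_smul, Real.norm_eq_abs,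
        abs_of_nonneg hs]
    nlinarith [norm_nonneg (G q - g), norm_nonneg w, hnw]
  have hEbound : ‖E‖ ≤ (s * N3 w)^2 / 2 := by
    rw [hE]
    have := aux_taylor G hd N3 hN3.2.1 hN3nn
      (fun a y u => by
        have := hH2.1 a y u
        simpa [hess] using this) x (s • w)
    refine le_trans this ?_
    rw [hN3.2.1, abs_of_nonneg hs]
  have hHg : ‖H g‖ ≤ ‖g‖ := by
    calc ‖H g‖ ≤ ‖H‖ * ‖g‖ := H.le_opNorm g
      _ ≤ 1 * ‖g‖ := mul_le_mul_of_nonneg_right (hHess' q) (norm_nonneg g)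
      _ = ‖g‖ := one_mul _
  have hB2 : ‖D2‖ ≤ s^2/4 * ((N3 w)^2 + ‖g‖) := by
    rw [hD2]
    refine le_trans (norm_add_le _ _) ?_
    rw [norm_smul, norm_smul, Real.norm_eq_abs, Real.norm_eq_abs]
    rw [abs_of_nonneg (by norm_num : (0:ℝ) ≤ (2:ℝ)⁻¹),
      abs_of_nonneg (by positivity : (0:ℝ) ≤ s^2/4)]
    nlinarith [hEbound, hHg, norm_nonneg E, norm_nonneg (H g)]
  -- put it together
  have hpn : pnormSq ((D1, D2) : Euc (Fin d) × Euc (Fin d)) = ‖D1‖^2 + ‖D2‖^2 := rfl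
  rw [hpn]
  have hS1 : ‖D1‖^2 ≤ s^4*((1/3)*‖v‖^2 + (1/400)*‖g‖^2) :=
    aux_scal1 s ‖v‖ ‖g‖ ‖D1‖ hs hs10 (norm_nonneg v) (norm_nonneg g) (norm_nonneg D1) hB1
  have hS2 : ‖D2‖^2 ≤ s^4*((393/2800)*‖g‖^2 + (1/7)*(N3 v)^4 + (1/140)*(N3 g)^4) :=
    aux_scal2 s (N3 w) (N3 v) (N3 g) ‖g‖ ‖D2‖ hs hs10 (hN3nn v) (hN3nn g)
      (norm_nonneg g) (hN3nn w) hNw (norm_nonneg D2) hB2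
  have : (1/400 : ℝ) + 393/2800 = 1/7 := by norm_num
  nlinarith [hS1, hS2]


end GHMCPaper
end
end
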